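/- If a twice-differentiable function φ : ℝ → ℝ with φ > 0 and (log φ)' never zero satisfies the constant Prelec measure condition -(log φ)''/(log φ)' = k for a constant k ≠ 0, then there exist constants a ≠ 0 and b > 0 such that φ(x) = b·exp(-(a/k)·e^{-kx}) for all x. -/

import Mathlib

theorem constant_prelec_measure_CADI (φ : ℝ → ℝ) (hφpos : ∀ x, 0 < φ x)
    (hφ : ∀ x, DifferentiableAt ℝ φ x)
    (k : ℝ) (hk : k ≠ 0)
    (g : ℝ → ℝ) (hg : g = Real.log ∘ φ)
    (hg1 : Differentiable ℝ g) (hg2 : Differentiable ℝ (deriv g))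
    (hgne : ∀ x, deriv g x ≠ 0)
    (hprelec : ∀ x, deriv (deriv g) x = -k * deriv g x) :
    ∃ a b : ℝ, a ≠ 0 ∧ 0 < b ∧
      ∀ x, φ x = b * Real.exp (-(a / k) * Real.exp (-k * x)) := by
  set a := deriv g 0 with ha
  -- F x = deriv g x * exp (k x) is constant
  have hF : ∀ x, HasDerivAt (fun x => deriv g x * Real.exp (k * x)) 0 x := by
    intro x
    have h1 : HasDerivAt (deriv g) (-k * deriv g x) x := by
      rw [← hprelec x]; exact (hg2 x).hasDerivAt
    have h2 : HasDerivAt (fun x => Real.exp (k * x)) (Real.exp (k * x) * k) x :=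
      (((hasDerivAt_id x).const_mul k).exp).congr_deriv (by simp)
    have : HasDerivAt (fun x => deriv g x * Real.exp (k * x)) _ x := h1.mul h2
    convert this using 1
    ring
  have hFconst : ∀ x, deriv g x * Real.exp (k * x) = a := by
    intro x
    have := is_const_of_deriv_eq_zero (f := fun x => deriv g x * Real.exp (k * x))
      (fun y => ((hF y).differentiableAt)) (fun y => (hF y).deriv) x 0
    simpa using this
  have hderiv : ∀ x, deriv g x = a * Real.exp (-k * x) := by
    intro x
    have h : deriv g x * Real.exp (k * x) * Real.exp (-k * x) = a * Real.exp (-k * x) := by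
      rw [hFconst x]
    rw [mul_assoc, ← Real.exp_add] at h
    simpa using h
  have hane : a ≠ 0 := by
    intro h
    exact hgne 0 (by simpa [h] using hderiv 0)
  -- G x = g x + (a/k) * exp (-k x) is constant
  have hG : ∀ x, HasDerivAt (fun x => g x + (a / k) * Real.exp (-k * x)) 0 x := by
    intro x
    have h1 : HasDerivAt g (a * Real.exp (-k * x)) x := by
      rw [← hderiv x]; exact (hg1 x).hasDerivAt
    have h2 : HasDerivAt (fun x => (a / k) * Real.exp (-k * x))
        ((a / k) * (Real.exp (-k * x) * (-k))) x :=
      ((((hasDerivAt_id x).const_mul (-k)).exp).const_mul (a / k)).congr_deriv (by simp)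
    have : HasDerivAt (fun x => g x + (a / k) * Real.exp (-k * x)) _ x := h1.add h2
    convert this using 1
    field_simp
    ring
  have hGconst : ∀ x, g x + (a / k) * Real.exp (-k * x) = g 0 + (a / k) * Real.exp 0 := by
    intro x
    have := is_const_of_deriv_eq_zero (f := fun x => g x + (a / k) * Real.exp (-k * x))
      (fun y => ((hG y).differentiableAt)) (fun y => (hG y).deriv) x 0
    simpa using this
  refine ⟨a, Real.exp (g 0 + (a / k) * Real.exp 0), hane, Real.exp_pos _, fun x => ?_⟩
  have hφx : φ x = Real.exp (g x) := by
    rw [hg]; simp [Function.comp, Real.exp_log (hφpos x)]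
  rw [hφx, ← Real.exp_add]
  congr 1
  have := hGconst x
  linarith
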